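/- Let H_y be the Hessian matrix of a form F at a point y with F(y) = 0 and ∇F(y) ≠ 0, and suppose H_y·y is a nonzero multiple of ∇F(y). Define M₂(y) as the set of vectors h such that (∇F(y))·h = 0 and (H_y h)·x = 0 for all x with (∇F(y))·x = 0. Then M₂(y) is contained in the linear span of ker H_y and y; in particular dim M₂(y) ≤ dim ker H_y + 1. -/
import Mathlib

open Matrix

lemma mem_span_of_perp {n : ℕ} {K : Type*} [Field K] {g v : Fin n → K} (hg : g ≠ 0)
    (h : ∀ x : Fin n → K, g ⬝ᵥ x = 0 → v ⬝ᵥ x = 0) :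
    ∃ lam : K, v = lam • g := by
  obtain ⟨i, hi⟩ : ∃ i, g i ≠ 0 := by
    by_contra hcon
    push_neg at hcon
    exact hg (funext fun i => hcon i)
  refine ⟨v i / g i, funext fun j => ?_⟩
  have hx : g ⬝ᵥ ((g i) • (Pi.single j 1 : Fin n → K) - (g j) • (Pi.single i 1 : Fin n → K)) = 0 := by
    simp [dotProduct_sub, dotProduct_smul, dotProduct_single]
    ring
  have key := h _ hx
  simp [dotProduct_sub, dotProduct_smul, dotProduct_single] at key
  show v j = (v i / g i) * g j
  field_simp
  linear_combination key

theorem M2_subset_span_ker_and_y {K : Type*} [Field K] [IsAlgClosed K] [CharZero K]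
    (n : ℕ) (H : Matrix (Fin n) (Fin n) K) (hH : H.IsSymm)
    (y g : Fin n → K) (hg : g ≠ 0) (c : K) (hc : c ≠ 0)
    (hEuler : H.mulVec y = c • g)
    (M₂ : Set (Fin n → K))
    (hM₂ : M₂ = {h | g ⬝ᵥ h = 0 ∧ ∀ x : Fin n → K, g ⬝ᵥ x = 0 → (H.mulVec h) ⬝ᵥ x = 0}) :
    M₂ ⊆ ↑(Submodule.span K ((LinearMap.ker H.mulVecLin : Set (Fin n → K)) ∪ {y})) ∧
    Module.finrank K (Submodule.span K M₂)
      ≤ Module.finrank K (LinearMap.ker H.mulVecLin) + 1 := by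
  have hsub : M₂ ⊆ ↑(Submodule.span K ((LinearMap.ker H.mulVecLin : Set (Fin n → K)) ∪ {y})) := by
    intro h hh
    rw [hM₂] at hh
    obtain ⟨-, hperp⟩ := hh
    obtain ⟨lam, hlam⟩ := mem_span_of_perp hg hperp
    have hker : h - (lam / c) • y ∈ LinearMap.ker H.mulVecLin := by
      rw [LinearMap.mem_ker]
      simp [Matrix.mulVecLin_apply, Matrix.mulVec_sub, Matrix.mulVec_smul, hEuler, hlam,
        smul_smul, div_mul_cancel₀ _ hc]
    have h1 : (h - (lam / c) • y) ∈ Submodule.span K ((LinearMap.ker H.mulVecLin : Set (Fin n → K)) ∪ {y}) :=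
      Submodule.subset_span (Set.mem_union_left _ hker)
    have h2 : y ∈ Submodule.span K ((LinearMap.ker H.mulVecLin : Set (Fin n → K)) ∪ {y}) :=
      Submodule.subset_span (Set.mem_union_right _ rfl)
    have := Submodule.add_mem _ h1 (Submodule.smul_mem _ (lam / c) h2)
    simpa using this
  refine ⟨hsub, ?_⟩
  have hle : Submodule.span K M₂ ≤
      Submodule.span K ((LinearMap.ker H.mulVecLin : Set (Fin n → K)) ∪ {y}) :=
    Submodule.span_le.mpr hsub
  have heq : Submodule.span K ((LinearMap.ker H.mulVecLin : Set (Fin n → K)) ∪ {y})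
      = LinearMap.ker H.mulVecLin ⊔ Submodule.span K {y} := by
    rw [Submodule.span_union, Submodule.span_eq]
  calc Module.finrank K (Submodule.span K M₂)
      ≤ Module.finrank K ↥(LinearMap.ker H.mulVecLin ⊔ Submodule.span K {y}) := by
        apply Submodule.finrank_mono
        rw [← heq]; exact hle
    _ ≤ Module.finrank K (LinearMap.ker H.mulVecLin) + Module.finrank K (Submodule.span K ({y} : Set (Fin n → K))) :=
        Submodule.finrank_add_le_finrank_add_finrank _ _
    _ ≤ Module.finrank K (LinearMap.ker H.mulVecLin) + 1 := by
        gcongr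
        exact finrank_span_le_card _ |>.trans (by simp)
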